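/- arXiv:1907.04853 — 5 statements merged into one kernel-verified Lean document; each statement's English description precedes it below -/
import Mathlib

section
/- Let T ≥ 3 be an integer and K = ⌊(T−1)/2⌋. Suppose (𝒟, m, (F_t)_{t=1}^{T}) and (𝒟′, m′, (F′_t)_{t=1}^{T}) are two choice-set structures on 𝒴 with horizon T, and that each satisfies the linear independence condition: for every subset 𝒯* ⊆ {1,…,T} with |𝒯*| = K, the family of functions 𝒴^K → ℝ given by (y_t)_{t∈𝒯*} ↦ ∏_{t∈𝒯*} F_t(y_t|D), indexed by D ∈ 𝒟 (respectively, the primed family indexed by D ∈ 𝒟′), is linearly independent in the real vector space of functions 𝒴^K → ℝ. If the two structures induce the same joint distribution on 𝒴^T, i.e. Σ_{D∈𝒟} m(D) ∏_{t=1}^{T} F_t(y_t|D) = Σ_{D∈𝒟′} m′(D) ∏_{t=1}^{T} F′_t(y_t|D) for every (y_1,…,y_T) ∈ 𝒴^T, then 𝒟′ = 𝒟, m′(D) = m(D) for every D ∈ 𝒟, and F′_t(·|D) = F_t(·|D) for every t ∈ {1,…,T} and every D ∈ 𝒟. -/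
open Finset

lemma exists_dual {V : Type*} [AddCommGroup V] [Module ℝ V] {ι : Type*} [DecidableEq ι]
    (v : ι → V) (hv : LinearIndependent ℝ v) :
    ∃ φ : ι → (V →ₗ[ℝ] ℝ), ∀ i j, φ i (v j) = if i = j then 1 else 0 := by
  classical
  have hs : LinearIndepOn ℝ id (Set.range v) := hv.linearIndepOn_id
  have hsub : Set.range v ⊆ hs.extend (Set.subset_univ _) := Module.Basis.subset_extend hs
  refine ⟨fun i => (Module.Basis.extend hs).coord ⟨v i, hsub ⟨i, rfl⟩⟩, fun i j => ?_⟩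
  have hvj : v j = (Module.Basis.extend hs) ⟨v j, hsub ⟨j, rfl⟩⟩ := by
    rw [Module.Basis.extend_apply_self]
  rw [hvj, Module.Basis.coord_apply, Module.Basis.repr_self, Finsupp.single_apply]
  by_cases h : i = j
  · subst h; simp
  · have hne : ¬((⟨v j, hsub ⟨j, rfl⟩⟩ : hs.extend (Set.subset_univ _)) = ⟨v i, hsub ⟨i, rfl⟩⟩) := by
      simp only [Subtype.mk.injEq]
      exact fun hvij => h (hv.injective hvij).symm
    simp [hne, h]

lemma key {Y : Type*} [Fintype Y] [DecidableEq Y]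
    (T : ℕ) (A B : Finset ℕ) (τ : ℕ)
    (hA : A ⊆ Finset.range T) (hB : B ⊆ Finset.range T) (hτ : τ < T)
    (hAB : Disjoint A B) (hτA : τ ∉ A) (hτB : τ ∉ B)
    (𝒟 𝒟' : Finset (Finset Y))
    (h𝒟ne : ∀ D ∈ 𝒟, D.Nonempty)
    (m m' : Finset Y → ℝ) (hm : ∀ D ∈ 𝒟, 0 < m D)
    (F F' : ℕ → Finset Y → Y → ℝ)
    (hFpos : ∀ t < T, ∀ D ∈ 𝒟, ∀ y ∈ D, 0 < F t D y)
    (hFzero : ∀ t < T, ∀ D ∈ 𝒟, ∀ y ∉ D, F t D y = 0)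
    (hF'pos : ∀ t < T, ∀ D ∈ 𝒟', ∀ y ∈ D, 0 < F' t D y)
    (hF'zero : ∀ t < T, ∀ D ∈ 𝒟', ∀ y ∉ D, F' t D y = 0)
    (hLIA : ∀ α : Finset Y → ℝ,
        (∀ ys : ℕ → Y, ∑ D ∈ 𝒟, α D * ∏ t ∈ A, F t D (ys t) = 0) →
        ∀ D ∈ 𝒟, α D = 0)
    (hLIB' : ∀ α : Finset Y → ℝ,
        (∀ ys : ℕ → Y, ∑ D ∈ 𝒟', α D * ∏ t ∈ B, F' t D (ys t) = 0) →
        ∀ D ∈ 𝒟', α D = 0)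
    (heq1 : ∀ ys : ℕ → Y,
      ∑ D ∈ 𝒟, m D * ∏ t ∈ insert τ (A ∪ B), F t D (ys t)
        = ∑ D ∈ 𝒟', m' D * ∏ t ∈ insert τ (A ∪ B), F' t D (ys t))
    (heq2 : ∀ ys : ℕ → Y,
      ∑ D ∈ 𝒟, m D * ∏ t ∈ A ∪ B, F t D (ys t)
        = ∑ D ∈ 𝒟', m' D * ∏ t ∈ A ∪ B, F' t D (ys t)) :
    ∀ D₀ ∈ 𝒟, D₀ ∈ 𝒟' ∧ ∀ y, F' τ D₀ y = F τ D₀ y := by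
  classical
  intro D₀ hD₀
  -- the vectors in the function space (ℕ → Y) → ℝ
  set v : {D // D ∈ 𝒟} → ((ℕ → Y) → ℝ) := fun D => fun ys => ∏ t ∈ A, F t D.1 (ys t) with hv_def
  set v' : {D // D ∈ 𝒟'} → ((ℕ → Y) → ℝ) := fun D => fun ys => ∏ t ∈ A, F' t D.1 (ys t) with hv'_def
  have hli : LinearIndependent ℝ v := by
    rw [Fintype.linearIndependent_iff]
    intro g hg i
    set α : Finset Y → ℝ := fun D => if h : D ∈ 𝒟 then g ⟨D, h⟩ else 0 with hα
    have hmain : ∀ ys : ℕ → Y, ∑ D ∈ 𝒟, α D * ∏ t ∈ A, F t D (ys t) = 0 := by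
      intro ys
      have := congrFun hg ys
      simp only [Finset.sum_apply, Pi.smul_apply, smul_eq_mul, Pi.zero_apply] at this
      rw [← Finset.sum_coe_sort 𝒟 (fun D => α D * ∏ t ∈ A, F t D (ys t))]
      rw [← this]
      refine Finset.sum_congr rfl fun D _ => ?_
      simp [hα, D.2, hv_def]
    have := hLIA α hmain i.1 i.2
    simpa [hα, i.2] using this
  obtain ⟨φ, hφ⟩ := exists_dual v hli
  set φ₀ : ((ℕ → Y) → ℝ) →ₗ[ℝ] ℝ := φ ⟨D₀, hD₀⟩ with hφ₀
  -- abbreviations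
  set gB : Finset Y → (ℕ → Y) → ℝ := fun D r => ∏ t ∈ B, F t D (r t) with hgB
  set gB' : Finset Y → (ℕ → Y) → ℝ := fun D r => ∏ t ∈ B, F' t D (r t) with hgB'
  have hτAB : τ ∉ A ∪ B := by simp [hτA, hτB]
  -- pointwise product splitting
  have hsplit : ∀ (G : ℕ → Finset Y → Y → ℝ) (D : Finset Y) (a r : ℕ → Y) (y : Y),
      ∏ t ∈ insert τ (A ∪ B),
          G t D ((fun t => if t ∈ A then a t else if t = τ then y else r t) t)
        = G τ D y * ((∏ t ∈ A, G t D (a t)) * ∏ t ∈ B, G t D (r t)) := by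
    intro G D a r y
    rw [Finset.prod_insert hτAB, Finset.prod_union hAB]
    congr 1
    · simp [hτA]
    congr 1
    · exact Finset.prod_congr rfl fun t ht => by simp [ht]
    · refine Finset.prod_congr rfl fun t ht => ?_
      have htA : t ∉ A := Finset.disjoint_left.mp hAB.symm ht
      have htτ : t ≠ τ := fun h => hτB (h ▸ ht)
      simp [htA, htτ]
  have hsplit2 : ∀ (G : ℕ → Finset Y → Y → ℝ) (D : Finset Y) (a r : ℕ → Y),
      ∏ t ∈ A ∪ B, G t D ((fun t => if t ∈ A then a t else r t) t)
        = (∏ t ∈ A, G t D (a t)) * ∏ t ∈ B, G t D (r t) := by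
    intro G D a r
    rw [Finset.prod_union hAB]
    congr 1
    · exact Finset.prod_congr rfl fun t ht => by simp [ht]
    · refine Finset.prod_congr rfl fun t ht => ?_
      have htA : t ∉ A := Finset.disjoint_left.mp hAB.symm ht
      simp [htA]
  -- vector equation 1
  have ve1 : ∀ (y : Y) (r : ℕ → Y),
      ∑ D ∈ 𝒟.attach, (m D.1 * F τ D.1 y * gB D.1 r) • v D
        = ∑ D ∈ 𝒟'.attach, (m' D.1 * F' τ D.1 y * gB' D.1 r) • v' D := by
    intro y r
    funext a
    simp only [Finset.sum_apply, Pi.smul_apply, smul_eq_mul]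
    have := heq1 (fun t => if t ∈ A then a t else if t = τ then y else r t)
    rw [← Finset.sum_coe_sort 𝒟 (fun D => m D * ∏ t ∈ insert τ (A ∪ B),
          F t D ((fun t => if t ∈ A then a t else if t = τ then y else r t) t)),
        ← Finset.sum_coe_sort 𝒟' (fun D => m' D * ∏ t ∈ insert τ (A ∪ B),
          F' t D ((fun t => if t ∈ A then a t else if t = τ then y else r t) t))] at this
    calc ∑ D ∈ 𝒟.attach, m D.1 * F τ D.1 y * gB D.1 r * v D a
        = ∑ D ∈ 𝒟.attach, m D.1 * ∏ t ∈ insert τ (A ∪ B),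
            F t D.1 ((fun t => if t ∈ A then a t else if t = τ then y else r t) t) := by
          refine Finset.sum_congr rfl fun D _ => ?_
          rw [hsplit F D.1 a r y]; simp [hv_def, hgB]; ring
      _ = ∑ D ∈ 𝒟'.attach, m' D.1 * ∏ t ∈ insert τ (A ∪ B),
            F' t D.1 ((fun t => if t ∈ A then a t else if t = τ then y else r t) t) := this
      _ = ∑ D ∈ 𝒟'.attach, m' D.1 * F' τ D.1 y * gB' D.1 r * v' D a := by
          refine Finset.sum_congr rfl fun D _ => ?_
          rw [hsplit F' D.1 a r y]; simp [hv'_def, hgB']; ring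
  -- vector equation 2
  have ve2 : ∀ (r : ℕ → Y),
      ∑ D ∈ 𝒟.attach, (m D.1 * gB D.1 r) • v D
        = ∑ D ∈ 𝒟'.attach, (m' D.1 * gB' D.1 r) • v' D := by
    intro r
    funext a
    simp only [Finset.sum_apply, Pi.smul_apply, smul_eq_mul]
    have := heq2 (fun t => if t ∈ A then a t else r t)
    rw [← Finset.sum_coe_sort 𝒟 (fun D => m D * ∏ t ∈ A ∪ B,
          F t D ((fun t => if t ∈ A then a t else r t) t)),
        ← Finset.sum_coe_sort 𝒟' (fun D => m' D * ∏ t ∈ A ∪ B,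
          F' t D ((fun t => if t ∈ A then a t else r t) t))] at this
    calc ∑ D ∈ 𝒟.attach, m D.1 * gB D.1 r * v D a
        = ∑ D ∈ 𝒟.attach, m D.1 * ∏ t ∈ A ∪ B,
            F t D.1 ((fun t => if t ∈ A then a t else r t) t) := by
          refine Finset.sum_congr rfl fun D _ => ?_
          rw [hsplit2 F D.1 a r]; simp [hv_def, hgB]; ring
      _ = _ := this
      _ = ∑ D ∈ 𝒟'.attach, m' D.1 * gB' D.1 r * v' D a := by
          refine Finset.sum_congr rfl fun D _ => ?_
          rw [hsplit2 F' D.1 a r]; simp [hv'_def, hgB']; ring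
  -- apply φ₀ to both
  have happ : ∀ (c : {D // D ∈ 𝒟} → ℝ),
      φ₀ (∑ D ∈ 𝒟.attach, c D • v D) = c ⟨D₀, hD₀⟩ := by
    intro c
    rw [map_sum]
    simp_rw [map_smul, smul_eq_mul]
    rw [Finset.sum_eq_single_of_mem (⟨D₀, hD₀⟩ : {D // D ∈ 𝒟}) (Finset.mem_attach _ _)]
    · rw [hφ]; simp
    · intro b _ hb
      rw [hφ]; simp [hb.symm]
  have e1 : ∀ (y : Y) (r : ℕ → Y),
      m D₀ * F τ D₀ y * gB D₀ r
        = ∑ D ∈ 𝒟'.attach, m' D.1 * F' τ D.1 y * gB' D.1 r * φ₀ (v' D) := by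
    intro y r
    have := congrArg φ₀ (ve1 y r)
    rw [happ, map_sum] at this
    rw [this]
    exact Finset.sum_congr rfl fun D _ => by rw [map_smul, smul_eq_mul]
  have e2 : ∀ (r : ℕ → Y),
      m D₀ * gB D₀ r
        = ∑ D ∈ 𝒟'.attach, m' D.1 * gB' D.1 r * φ₀ (v' D) := by
    intro r
    have := congrArg φ₀ (ve2 r)
    rw [happ, map_sum] at this
    rw [this]
    exact Finset.sum_congr rfl fun D _ => by rw [map_smul, smul_eq_mul]
  -- coefficients
  set cc : Finset Y → ℝ := fun D => if h : D ∈ 𝒟' then m' D * φ₀ (v' ⟨D, h⟩) else 0 with hcc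
  have hzero : ∀ y : Y, ∀ D' ∈ 𝒟', cc D' * (F τ D₀ y - F' τ D' y) = 0 := by
    intro y
    refine hLIB' (fun D' => cc D' * (F τ D₀ y - F' τ D' y)) ?_
    intro r
    have h1 := e1 y r
    have h2 := e2 r
    have h3 : F τ D₀ y * (m D₀ * gB D₀ r) - m D₀ * F τ D₀ y * gB D₀ r = 0 := by ring
    rw [h1, h2] at h3
    rw [← Finset.sum_coe_sort 𝒟' (fun D' => cc D' * (F τ D₀ y - F' τ D' y) * ∏ t ∈ B, F' t D' (r t))]
    rw [← h3, Finset.mul_sum, ← Finset.sum_sub_distrib]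
    refine Finset.sum_congr rfl fun D _ => ?_
    simp only [hcc, D.2, dif_pos]
    simp only [hgB']
    ring
  -- existence of a nonzero coefficient
  obtain ⟨d, hd⟩ := h𝒟ne D₀ hD₀
  have hgBpos : 0 < gB D₀ (fun _ => d) := by
    refine Finset.prod_pos fun t ht => ?_
    exact hFpos t (Finset.mem_range.mp (hB ht)) D₀ hD₀ d hd
  have hex : ∃ h : D₀ ∈ 𝒟', cc D₀ ≠ 0 ∧ ∀ y, F' τ D₀ y = F τ D₀ y := by
    by_cases hall : ∀ D' ∈ 𝒟', cc D' = 0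
    · exfalso
      have := e2 (fun _ => d)
      have hrhs : ∑ D ∈ 𝒟'.attach, m' D.1 * gB' D.1 (fun _ => d) * φ₀ (v' D) = 0 := by
        refine Finset.sum_eq_zero fun D _ => ?_
        have : cc D.1 = 0 := hall D.1 D.2
        simp only [hcc, D.2, dif_pos] at this
        rcases mul_eq_zero.mp this with h | h
        · rw [h]; ring
        · rw [h]; ring
      rw [hrhs] at this
      have := mul_pos (hm D₀ hD₀) hgBpos
      linarith [this]
    · push_neg at hall
      obtain ⟨D', hD', hccne⟩ := hall
      have hFeq : ∀ y, F τ D₀ y = F' τ D' y := by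
        intro y
        have := hzero y D' hD'
        rcases mul_eq_zero.mp this with h | h
        · exact absurd h hccne
        · linarith
      have hDeq : D' = D₀ := by
        ext y
        constructor
        · intro hy
          by_contra hyD₀
          have hz := hFzero τ hτ D₀ hD₀ y hyD₀
          have hp := hF'pos τ hτ D' hD' y hy
          rw [hFeq y] at hz
          linarith
        · intro hy
          by_contra hyD'
          have hz := hF'zero τ hτ D' hD' y hyD'
          have hp := hFpos τ hτ D₀ hD₀ y hy
          rw [hFeq y] at hp
          linarith
      subst hDeq
      exact ⟨hD', hccne, fun y => (hFeq y).symm⟩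
  obtain ⟨h1, _, h3⟩ := hex
  exact ⟨h1, h3⟩

lemma marg_step {Y : Type*} [Fintype Y] [DecidableEq Y]
    (𝒟 : Finset (Finset Y)) (c : Finset Y → ℝ) (F : ℕ → Finset Y → Y → ℝ)
    (S : Finset ℕ) (t₀ : ℕ) (ht₀ : t₀ ∈ S)
    (hsum : ∀ D ∈ 𝒟, ∑ y, F t₀ D y = 1) (ys : ℕ → Y) :
    ∑ y : Y, ∑ D ∈ 𝒟, c D * ∏ t ∈ S, F t D (Function.update ys t₀ y t)
      = ∑ D ∈ 𝒟, c D * ∏ t ∈ S.erase t₀, F t D (ys t) := by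
  rw [Finset.sum_comm]
  refine Finset.sum_congr rfl fun D hD => ?_
  rw [← Finset.mul_sum]
  congr 1
  have hstep : ∀ y : Y, ∏ t ∈ S, F t D (Function.update ys t₀ y t)
      = F t₀ D y * ∏ t ∈ S.erase t₀, F t D (ys t) := by
    intro y
    conv_lhs => rw [← Finset.insert_erase ht₀]
    rw [Finset.prod_insert (Finset.notMem_erase _ _), Function.update_self]
    congr 1
    exact Finset.prod_congr rfl fun t ht =>
      by rw [Function.update_of_ne (Finset.ne_of_mem_erase ht)]
  simp_rw [hstep]
  rw [← Finset.sum_mul, hsum D hD, one_mul]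

lemma marg {Y : Type*} [Fintype Y] [DecidableEq Y] (T : ℕ)
    (𝒟 𝒟' : Finset (Finset Y)) (m m' : Finset Y → ℝ)
    (F F' : ℕ → Finset Y → Y → ℝ)
    (hFsum : ∀ t < T, ∀ D ∈ 𝒟, ∑ y, F t D y = 1)
    (hF'sum : ∀ t < T, ∀ D ∈ 𝒟', ∑ y, F' t D y = 1)
    (heq : ∀ ys : ℕ → Y, ∑ D ∈ 𝒟, m D * ∏ t ∈ Finset.range T, F t D (ys t)
        = ∑ D ∈ 𝒟', m' D * ∏ t ∈ Finset.range T, F' t D (ys t))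
    (E : Finset ℕ) :
    E ⊆ Finset.range T → ∀ ys : ℕ → Y,
      ∑ D ∈ 𝒟, m D * ∏ t ∈ Finset.range T \ E, F t D (ys t)
        = ∑ D ∈ 𝒟', m' D * ∏ t ∈ Finset.range T \ E, F' t D (ys t) := by
  classical
  induction E using Finset.induction_on with
  | empty => intro _ ys; simpa using heq ys
  | @insert t₀ E ht₀ ih =>
    intro hsub ys
    have hE : E ⊆ Finset.range T := (Finset.subset_insert _ _).trans hsub
    have ht₀T : t₀ ∈ Finset.range T := hsub (Finset.mem_insert_self _ _)
    have ht₀E : t₀ ∈ Finset.range T \ E := Finset.mem_sdiff.mpr ⟨ht₀T, ht₀⟩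
    have hsd : Finset.range T \ insert t₀ E = (Finset.range T \ E).erase t₀ := by
      ext x; simp [Finset.mem_erase, Finset.mem_sdiff, not_or]; tauto
    rw [hsd,
      ← marg_step 𝒟 m F (Finset.range T \ E) t₀ ht₀E
        (fun D hD => hFsum t₀ (Finset.mem_range.mp ht₀T) D hD) ys,
      ← marg_step 𝒟' m' F' (Finset.range T \ E) t₀ ht₀E
        (fun D hD => hF'sum t₀ (Finset.mem_range.mp ht₀T) D hD) ys]
    exact Finset.sum_congr rfl fun y _ => ih hE (Function.update ys t₀ y)

private lemma exists_AB (T K : ℕ) (hT : 3 ≤ T) (hK : K = (T - 1) / 2) (τ : ℕ) (hτ : τ < T) :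
    ∃ A B : Finset ℕ, A ⊆ Finset.range T ∧ B ⊆ Finset.range T ∧ Disjoint A B ∧
      τ ∉ A ∧ τ ∉ B ∧ A.card = K ∧ B.card = K := by
  have hdiv : (T - 1) / 2 * 2 ≤ T - 1 := Nat.div_mul_le_self _ _
  have h2K : 2 * K ≤ T - 1 := by omega
  have hcard : K ≤ ((Finset.range T).erase τ).card := by
    rw [Finset.card_erase_of_mem (Finset.mem_range.mpr hτ), Finset.card_range]; omega
  obtain ⟨A, hA_sub, hAcard⟩ := Finset.exists_subset_card_eq hcard
  have hcard2 : K ≤ (((Finset.range T).erase τ) \ A).card := by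
    rw [Finset.card_sdiff_of_subset hA_sub, Finset.card_erase_of_mem (Finset.mem_range.mpr hτ),
      Finset.card_range, hAcard]; omega
  obtain ⟨B, hB_sub, hBcard⟩ := Finset.exists_subset_card_eq hcard2
  refine ⟨A, B, hA_sub.trans (Finset.erase_subset _ _),
    (hB_sub.trans (Finset.sdiff_subset)).trans (Finset.erase_subset _ _), ?_, ?_, ?_, hAcard, hBcard⟩
  · rw [Finset.disjoint_left]
    intro x hxA hxB
    exact (Finset.mem_sdiff.mp (hB_sub hxB)).2 hxA
  · exact fun h => (Finset.mem_erase.mp (hA_sub h)).1 rfl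
  · exact fun h => (Finset.mem_erase.mp (Finset.mem_sdiff.mp (hB_sub h)).1).1 rfl

/-- **Uniqueness of choice-set structures (Theorem 1).** -/
theorem unobserved_choice_sets_identification
    {Y : Type*} [Fintype Y] [DecidableEq Y] [Nonempty Y]
    (T : ℕ) (hT : 3 ≤ T) (K : ℕ) (hK : K = (T - 1) / 2)
    (𝒟 𝒟' : Finset (Finset Y))
    (h𝒟 : 𝒟.Nonempty) (h𝒟' : 𝒟'.Nonempty)
    (h𝒟ne : ∀ D ∈ 𝒟, D.Nonempty) (h𝒟'ne : ∀ D ∈ 𝒟', D.Nonempty)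
    (m m' : Finset Y → ℝ)
    (hm : ∀ D ∈ 𝒟, 0 < m D) (hm' : ∀ D ∈ 𝒟', 0 < m' D)
    (hmsum : ∑ D ∈ 𝒟, m D = 1) (hm'sum : ∑ D ∈ 𝒟', m' D = 1)
    (F F' : ℕ → Finset Y → Y → ℝ)
    (hFpos : ∀ t < T, ∀ D ∈ 𝒟, ∀ y ∈ D, 0 < F t D y)
    (hFzero : ∀ t < T, ∀ D ∈ 𝒟, ∀ y ∉ D, F t D y = 0)
    (hFsum : ∀ t < T, ∀ D ∈ 𝒟, ∑ y, F t D y = 1)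
    (hF'pos : ∀ t < T, ∀ D ∈ 𝒟', ∀ y ∈ D, 0 < F' t D y)
    (hF'zero : ∀ t < T, ∀ D ∈ 𝒟', ∀ y ∉ D, F' t D y = 0)
    (hF'sum : ∀ t < T, ∀ D ∈ 𝒟', ∑ y, F' t D y = 1)
    (hLI : ∀ 𝒯 ⊆ Finset.range T, 𝒯.card = K →
      ∀ α : Finset Y → ℝ,
        (∀ ys : ℕ → Y, ∑ D ∈ 𝒟, α D * ∏ t ∈ 𝒯, F t D (ys t) = 0) →
        ∀ D ∈ 𝒟, α D = 0)
    (hLI' : ∀ 𝒯 ⊆ Finset.range T, 𝒯.card = K →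
      ∀ α : Finset Y → ℝ,
        (∀ ys : ℕ → Y, ∑ D ∈ 𝒟', α D * ∏ t ∈ 𝒯, F' t D (ys t) = 0) →
        ∀ D ∈ 𝒟', α D = 0)
    (heq : ∀ ys : ℕ → Y,
      ∑ D ∈ 𝒟, m D * ∏ t ∈ Finset.range T, F t D (ys t)
        = ∑ D ∈ 𝒟', m' D * ∏ t ∈ Finset.range T, F' t D (ys t)) :
    𝒟' = 𝒟 ∧ (∀ D ∈ 𝒟, m' D = m D) ∧
      (∀ t < T, ∀ D ∈ 𝒟, ∀ y : Y, F' t D y = F t D y) := by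
  classical
  -- marginalized equalities
  have hmarg : ∀ S ⊆ Finset.range T, ∀ ys : ℕ → Y,
      ∑ D ∈ 𝒟, m D * ∏ t ∈ S, F t D (ys t)
        = ∑ D ∈ 𝒟', m' D * ∏ t ∈ S, F' t D (ys t) := by
    intro S hS ys
    have hE : Finset.range T \ (Finset.range T \ S) = S := by
      ext x
      simp only [Finset.mem_sdiff, not_and, not_not]
      exact ⟨fun ⟨h1, h2⟩ => h2 h1, fun h => ⟨hS h, fun _ => h⟩⟩
    have := marg T 𝒟 𝒟' m m' F F' hFsum hF'sum heq (Finset.range T \ S)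
      (Finset.sdiff_subset) ys
    rwa [hE] at this
  -- forward and backward applications of `key`
  have forward : ∀ τ, τ < T → ∀ D ∈ 𝒟, D ∈ 𝒟' ∧ ∀ y, F' τ D y = F τ D y := by
    intro τ hτ
    obtain ⟨A, B, hA, hB, hAB, hτA, hτB, hAcard, hBcard⟩ := exists_AB T K hT hK τ hτ
    have hsub1 : insert τ (A ∪ B) ⊆ Finset.range T := by
      intro x hx
      rcases Finset.mem_insert.mp hx with h | h
      · exact h ▸ Finset.mem_range.mpr hτ
      · rcases Finset.mem_union.mp h with h | h
        · exact hA h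
        · exact hB h
    have hsub2 : A ∪ B ⊆ Finset.range T := Finset.union_subset hA hB
    exact key T A B τ hA hB hτ hAB hτA hτB 𝒟 𝒟' h𝒟ne m m' hm F F'
      hFpos hFzero hF'pos hF'zero (hLI A hA hAcard) (hLI' B hB hBcard)
      (hmarg _ hsub1) (hmarg _ hsub2)
  have backward : ∀ D' ∈ 𝒟', D' ∈ 𝒟 := by
    have hτ : (0 : ℕ) < T := by omega
    obtain ⟨A, B, hA, hB, hAB, hτA, hτB, hAcard, hBcard⟩ := exists_AB T K hT hK 0 hτ
    have hsub1 : insert 0 (A ∪ B) ⊆ Finset.range T := by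
      intro x hx
      rcases Finset.mem_insert.mp hx with h | h
      · exact h ▸ Finset.mem_range.mpr hτ
      · rcases Finset.mem_union.mp h with h | h
        · exact hA h
        · exact hB h
    have hsub2 : A ∪ B ⊆ Finset.range T := Finset.union_subset hA hB
    intro D' hD'
    exact (key T A B 0 hA hB hτ hAB hτA hτB 𝒟' 𝒟 h𝒟'ne m' m hm' F' F
      hF'pos hF'zero hFpos hFzero (hLI' A hA hAcard) (hLI B hB hBcard)
      (fun ys => (hmarg _ hsub1 ys).symm) (fun ys => (hmarg _ hsub2 ys).symm) D' hD').1
  have h𝒟eq : 𝒟' = 𝒟 := by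
    apply Finset.Subset.antisymm
    · exact fun D hD => backward D hD
    · exact fun D hD => (forward 0 (by omega) D hD).1
  have hFeq : ∀ t < T, ∀ D ∈ 𝒟, ∀ y : Y, F' t D y = F t D y :=
    fun t ht D hD y => (forward t ht D hD).2 y
  refine ⟨h𝒟eq, ?_, hFeq⟩
  -- equality of the mixing weights
  have hτ : (0 : ℕ) < T := by omega
  obtain ⟨A, B, hA, hB, hAB, hτA, hτB, hAcard, hBcard⟩ := exists_AB T K hT hK 0 hτ
  have hsub2 : A ∪ B ⊆ Finset.range T := Finset.union_subset hA hB
  have hdiff : ∀ ys : ℕ → Y,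
      ∑ D ∈ 𝒟, (m D - m' D) * ∏ t ∈ A ∪ B, F t D (ys t) = 0 := by
    intro ys
    have h1 := hmarg _ hsub2 ys
    have h2 : ∑ D ∈ 𝒟', m' D * ∏ t ∈ A ∪ B, F' t D (ys t)
        = ∑ D ∈ 𝒟, m' D * ∏ t ∈ A ∪ B, F t D (ys t) := by
      rw [h𝒟eq]
      refine Finset.sum_congr rfl fun D hD => ?_
      congr 1
      exact Finset.prod_congr rfl fun t ht =>
        hFeq t (Finset.mem_range.mp (hsub2 ht)) D hD (ys t)
    rw [h2] at h1
    simp only [sub_mul]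
    rw [Finset.sum_sub_distrib, h1, sub_self]
  intro D₀ hD₀
  obtain ⟨d, hd⟩ := h𝒟ne D₀ hD₀
  set r : ℕ → Y := fun _ => d with hr
  set α : Finset Y → ℝ := fun D => (m D - m' D) * ∏ t ∈ B, F t D (r t) with hα
  have hαzero : ∀ D ∈ 𝒟, α D = 0 := by
    refine hLI A hA hAcard α ?_
    intro ys
    have := hdiff (fun t => if t ∈ A then ys t else r t)
    rw [← this]
    refine Finset.sum_congr rfl fun D _ => ?_
    rw [hα]
    have hprod : ∏ t ∈ A ∪ B, F t D ((fun t => if t ∈ A then ys t else r t) t)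
        = (∏ t ∈ A, F t D (ys t)) * ∏ t ∈ B, F t D (r t) := by
      rw [Finset.prod_union hAB]
      congr 1
      · exact Finset.prod_congr rfl fun t ht => by simp [ht]
      · refine Finset.prod_congr rfl fun t ht => ?_
        have htA : t ∉ A := Finset.disjoint_left.mp hAB.symm ht
        simp [htA]
    rw [hprod]
    ring
  have h0 := hαzero D₀ hD₀
  rw [hα] at h0
  have hpos : 0 < ∏ t ∈ B, F t D₀ (r t) := by
    refine Finset.prod_pos fun t ht => ?_
    exact hFpos t (Finset.mem_range.mp (hB ht)) D₀ hD₀ d hd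
  rcases mul_eq_zero.mp h0 with h | h
  · linarith
  · linarith
end

section
/- Let 𝒴 be a finite nonempty set with |𝒴| = Y and let K be an integer with K ≥ Y. For each t ∈ {1,…,K} and each nonempty subset D ⊆ 𝒴, let F_t(·|D) : 𝒴 → ℝ satisfy F_t(y|D) > 0 for every y ∈ D and F_t(y|D) = 0 for every y ∉ D. Then the family of functions 𝒴^K → ℝ given by (y_1,…,y_K) ↦ ∏_{t=1}^{K} F_t(y_t|D), indexed by the nonempty subsets D of 𝒴, is linearly independent in the real vector space of functions 𝒴^K → ℝ; in particular, for any collection of distinct nonempty subsets of 𝒴 the corresponding subfamily is linearly independent. -/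
/-- **Proposition 1 (sufficient condition for linear independence via long panels).**
If `K ≥ |𝒴|` and each `F_t(·|D)` has full support exactly on `D` (positive on `D`,
zero off `D`), then the family of product functions
`(y_1,…,y_K) ↦ ∏_{t<K} F_t(y_t|D)`, indexed by nonempty subsets `D` of `𝒴`,
is linearly independent; in particular any subfamily indexed by a collection `𝒟`
of distinct nonempty subsets is linearly independent. -/
theorem long_panel_linear_independence
    {Y : Type*} [Fintype Y] [DecidableEq Y] [Nonempty Y]
    (K : ℕ) (hK : Fintype.card Y ≤ K)
    (F : ℕ → Finset Y → Y → ℝ)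
    (hFpos : ∀ t < K, ∀ D : Finset Y, D.Nonempty → ∀ y ∈ D, 0 < F t D y)
    (hFzero : ∀ t < K, ∀ D : Finset Y, D.Nonempty → ∀ y ∉ D, F t D y = 0)
    (𝒟 : Finset (Finset Y)) (h𝒟 : ∀ D ∈ 𝒟, D.Nonempty)
    (α : Finset Y → ℝ)
    (hα : ∀ ys : ℕ → Y, ∑ D ∈ 𝒟, α D * ∏ t ∈ Finset.range K, F t D (ys t) = 0) :
    ∀ D ∈ 𝒟, α D = 0 := by
  suffices h : ∀ n : ℕ, ∀ D ∈ 𝒟, Fintype.card Y - D.card = n → α D = 0 by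
    intro D hD; exact h _ D hD rfl
  intro n
  induction n using Nat.strong_induction_on with
  | _ n IH =>
    intro D hD hcard
    obtain ⟨d0, hd0⟩ := h𝒟 D hD
    set l := D.toList with hl
    set ys : ℕ → Y := fun t => l.getD t d0 with hys
    have hmem : ∀ t, ys t ∈ D := by
      intro t
      by_cases ht : t < l.length
      · have h1 : ys t = l[t] := List.getD_eq_getElem l d0 ht
        rw [h1]
        have hm : l[t] ∈ l := List.getElem_mem ht
        exact Finset.mem_toList.mp hm
      · have : ys t = d0 := List.getD_eq_default l d0 (le_of_not_gt ht)
        rw [this]; exact hd0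
    have hcov : ∀ y ∈ D, ∃ t < K, ys t = y := by
      intro y hy
      have hyl : y ∈ l := Finset.mem_toList.mpr hy
      obtain ⟨t, ht, hgt⟩ := List.mem_iff_getElem.mp hyl
      refine ⟨t, ?_, ?_⟩
      · have : l.length = D.card := by rw [hl]; exact Finset.length_toList D
        have hD2 : D.card ≤ Fintype.card Y := Finset.card_le_univ D
        omega
      · have h1 : ys t = l[t] := List.getD_eq_getElem l d0 ht
        rw [h1, hgt]
    have hsum := hα ys
    have hzero : ∀ D' ∈ 𝒟, D' ≠ D →
        α D' * ∏ t ∈ Finset.range K, F t D' (ys t) = 0 := by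
      intro D' hD' hne
      by_cases hsub : D ⊆ D'
      · have hlt : D.card < D'.card :=
          Finset.card_lt_card (Finset.ssubset_iff_subset_ne.mpr ⟨hsub, (Ne.symm hne)⟩)
        have hle : D'.card ≤ Fintype.card Y := Finset.card_le_univ D'
        have : α D' = 0 := IH (Fintype.card Y - D'.card) (by omega) D' hD' rfl
        rw [this, zero_mul]
      · obtain ⟨y, hyD, hyD'⟩ := Finset.not_subset.mp hsub
        obtain ⟨t, htK, hty⟩ := hcov y hyD
        have : F t D' (ys t) = 0 := by
          rw [hty]; exact hFzero t htK D' (h𝒟 D' hD') y hyD'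
        rw [Finset.prod_eq_zero (Finset.mem_range.mpr htK) this, mul_zero]
    rw [Finset.sum_eq_single_of_mem D hD hzero] at hsum
    have hpos : 0 < ∏ t ∈ Finset.range K, F t D (ys t) := by
      apply Finset.prod_pos
      intro t ht
      exact hFpos t (Finset.mem_range.mp ht) D ⟨d0, hd0⟩ (ys t) (hmem t)
    exact (mul_eq_zero.mp hsum).resolve_right (ne_of_gt hpos)
end

section
/- Let 𝒴 be a finite nonempty set and K ≥ 1 an integer. Let D_1, D_2, …, D_d be nonempty subsets of 𝒴 with the excluded-choice property: for every k ∈ {1,…,d} there exists y_k ∈ D_k such that y_k ∉ D_{k′} for every k′ ≠ k. For each t ∈ {1,…,K} and each k ∈ {1,…,d}, let F_t(·|D_k) : 𝒴 → ℝ satisfy F_t(y|D_k) > 0 for every y ∈ D_k and F_t(y|D_k) = 0 for every y ∉ D_k. Then the family of functions 𝒴^K → ℝ given by (y_1,…,y_K) ↦ ∏_{t=1}^{K} F_t(y_t|D_k), indexed by k ∈ {1,…,d}, is linearly independent in the real vector space of functions 𝒴^K → ℝ. -/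
/-- **Proposition 2(ii) (excluded choices imply linear independence).**
Let `D 0, …, D (d-1)` be nonempty subsets of a finite nonempty set `𝒴` such that
every `D k` contains an alternative `y_k` belonging to no other `D k'`, and
suppose each `F_t(·|D_k)` is positive on `D_k` and zero off `D_k`.  Then the
family of product functions `(y_1,…,y_K) ↦ ∏_{t<K} F_t(y_t|D_k)`, indexed by
`k`, is linearly independent. -/
theorem excluded_choices_linear_independence
    {Y : Type*} [Fintype Y] [DecidableEq Y] [Nonempty Y]
    (K : ℕ) (hK : 1 ≤ K) (d : ℕ)
    (D : Fin d → Finset Y)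
    (hDne : ∀ k, (D k).Nonempty)
    (hexc : ∀ k : Fin d, ∃ y ∈ D k, ∀ k' : Fin d, k' ≠ k → y ∉ D k')
    (F : ℕ → Fin d → Y → ℝ)
    (hFpos : ∀ t < K, ∀ k, ∀ y ∈ D k, 0 < F t k y)
    (hFzero : ∀ t < K, ∀ k, ∀ y ∉ D k, F t k y = 0)
    (α : Fin d → ℝ)
    (hα : ∀ ys : ℕ → Y, ∑ k, α k * ∏ t ∈ Finset.range K, F t k (ys t) = 0) :
    ∀ k, α k = 0 := by
  intro k
  obtain ⟨y, hyD, hyexc⟩ := hexc k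
  have h := hα (fun _ => y)
  have hsum : ∑ k', α k' * ∏ t ∈ Finset.range K, F t k' y
      = α k * ∏ t ∈ Finset.range K, F t k y := by
    rw [Finset.sum_eq_single k]
    · intro k' _ hk'
      have : ∏ t ∈ Finset.range K, F t k' y = 0 := by
        apply Finset.prod_eq_zero (Finset.mem_range.mpr (Nat.lt_of_lt_of_le Nat.zero_lt_one hK))
        exact hFzero 0 (Nat.lt_of_lt_of_le Nat.zero_lt_one hK) k' y (hyexc k' hk')
      rw [this, mul_zero]
    · intro h; exact absurd (Finset.mem_univ k) h
  have hpos : 0 < ∏ t ∈ Finset.range K, F t k y := by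
    apply Finset.prod_pos
    intro t ht
    exact hFpos t (Finset.mem_range.mp ht) k y hyD
  have := h
  rw [hsum] at this
  exact (mul_eq_zero.mp this).resolve_right (ne_of_gt hpos)
end

section
/- Let (𝒟, m, (F_t)_{t=1}^{3}) be a choice-set structure on 𝒴 with horizon T = 3, and enumerate 𝒟 = {D_1,…,D_d}. Suppose z̃_1,…,z̃_d ∈ 𝒴 are distinct elements such that the d×d real matrices L̃_1 = [F_1(z̃_i|D_k)]_{i,k} and L̃_2 = [F_2(z̃_i|D_k)]_{i,k} are both invertible. Define the d×d matrices L̃_{1,2}[i,j] = Σ_{k=1}^{d} m(D_k) F_1(z̃_i|D_k) F_2(z̃_j|D_k) and, for each y ∈ 𝒴, L̃_{2,1,y}[i,j] = Σ_{k=1}^{d} m(D_k) F_2(z̃_i|D_k) F_1(z̃_j|D_k) F_3(y|D_k). Then L̃_{1,2} is invertible, and for every y ∈ 𝒴 one has the eigendecomposition L̃_{2,1,y} · (L̃_{1,2}ᵀ)^{−1} = L̃_2 · diag(F_3(y|D_1),…,F_3(y|D_d)) · L̃_2^{−1}. -/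
/-- **Step 3 of the proof of Theorem 1 (eigendecomposition).**
For a choice-set structure with horizon `T = 3` (times `F 0, F 1, F 2`), choice
sets `D 0, …, D (d-1)`, and distinct alternatives `z 0, …, z (d-1)` such that
`L̃₁ = [F₁(z_i|D_k)]` and `L̃₂ = [F₂(z_i|D_k)]` are invertible, the matrix
`L̃₁₂` is invertible and `L̃₂₁ʸ (L̃₁₂ᵀ)⁻¹ = L̃₂ diag(F₃(y|D_k)) L̃₂⁻¹` for all `y`. -/
theorem eigendecomposition_of_choice_matrices
    {Y : Type*} [Fintype Y] [DecidableEq Y] [Nonempty Y]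
    (d : ℕ) (hd : 1 ≤ d)
    (D : Fin d → Finset Y)
    (hDne : ∀ k, (D k).Nonempty) (hDinj : Function.Injective D)
    (m : Fin d → ℝ) (hm : ∀ k, 0 < m k) (hmsum : ∑ k, m k = 1)
    (F : Fin 3 → Fin d → Y → ℝ)
    (hFpos : ∀ t k, ∀ y ∈ D k, 0 < F t k y)
    (hFzero : ∀ t k, ∀ y ∉ D k, F t k y = 0)
    (hFsum : ∀ t k, ∑ y, F t k y = 1)
    (z : Fin d → Y) (hz : Function.Injective z)
    (L₁ L₂ L₁₂ : Matrix (Fin d) (Fin d) ℝ)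
    (L₂₁ : Y → Matrix (Fin d) (Fin d) ℝ)
    (hL₁ : L₁ = Matrix.of fun i k => F 0 k (z i))
    (hL₂ : L₂ = Matrix.of fun i k => F 1 k (z i))
    (hL₁₂ : L₁₂ = Matrix.of fun i j => ∑ k, m k * F 0 k (z i) * F 1 k (z j))
    (hL₂₁ : ∀ y : Y,
      L₂₁ y = Matrix.of fun i j => ∑ k, m k * F 1 k (z i) * F 0 k (z j) * F 2 k y)
    (hL₁inv : IsUnit L₁.det) (hL₂inv : IsUnit L₂.det) :
    IsUnit L₁₂.det ∧
      ∀ y : Y, L₂₁ y * (L₁₂.transpose)⁻¹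
        = L₂ * Matrix.diagonal (fun k => F 2 k y) * L₂⁻¹ := by

  set M := Matrix.diagonal m with hMdef
  have hMunit : IsUnit M.det := by
    rw [hMdef, Matrix.det_diagonal]
    exact isUnit_iff_ne_zero.2 (Finset.prod_ne_zero_iff.2 fun k _ => (hm k).ne')
  have hfact : L₁₂ = L₁ * M * L₂.transpose := by
    subst hL₁ hL₂ hL₁₂
    ext i j
    rw [Matrix.mul_apply]
    simp only [hMdef, Matrix.mul_diagonal, Matrix.transpose_apply, Matrix.of_apply]
    exact Finset.sum_congr rfl fun k _ => by ring
  have hL₁t : IsUnit L₁.transpose.det := by rwa [Matrix.det_transpose]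
  have hdet : IsUnit L₁₂.det := by
    rw [hfact, Matrix.det_mul, Matrix.det_mul, Matrix.det_transpose]
    exact (hL₁inv.mul hMunit).mul hL₂inv
  refine ⟨hdet, fun y => ?_⟩
  have hfact2 : L₂₁ y = L₂ * (Matrix.diagonal (fun k => F 2 k y) * M) * L₁.transpose := by
    rw [hL₂₁ y, hL₂, hL₁, hMdef, Matrix.diagonal_mul_diagonal]
    ext i j
    rw [Matrix.mul_apply]
    simp only [Matrix.mul_diagonal, Matrix.transpose_apply, Matrix.of_apply]
    exact Finset.sum_congr rfl fun k _ => by ring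
  have htr : L₁₂.transpose = L₂ * M * L₁.transpose := by
    rw [hfact, Matrix.transpose_mul, Matrix.transpose_mul, Matrix.transpose_transpose,
      hMdef, Matrix.diagonal_transpose, Matrix.mul_assoc]
  have hinv : (L₁₂.transpose)⁻¹ = L₁.transpose⁻¹ * (M⁻¹ * L₂⁻¹) := by
    rw [htr, Matrix.mul_inv_rev, Matrix.mul_inv_rev]
  rw [hfact2, hinv]
  have h1 : L₁.transpose * (L₁.transpose⁻¹ * (M⁻¹ * L₂⁻¹)) = M⁻¹ * L₂⁻¹ := by
    rw [← Matrix.mul_assoc, Matrix.mul_nonsing_inv _ hL₁t, Matrix.one_mul]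
  rw [Matrix.mul_assoc (L₂ * (Matrix.diagonal (fun k => F 2 k y) * M)), h1,
    Matrix.mul_assoc L₂, Matrix.mul_assoc, Matrix.mul_assoc,
    ← Matrix.mul_assoc M, Matrix.mul_nonsing_inv _ hMunit, Matrix.one_mul,
    ← Matrix.mul_assoc]
end

section
/- Let T ≥ 3 be an integer, K = ⌊(T−1)/2⌋, and let Z be a nonempty set. For each t ∈ {1,…,T} and each nonempty subset D ⊆ 𝒴, let F_t(·|D) : 𝒴 → ℝ and F′_t(·|D) : 𝒴 → ℝ each satisfy F_t(y|D) > 0 for y ∈ D, F_t(y|D) = 0 for y ∉ D, and Σ_{y∈𝒴} F_t(y|D) = 1 (and likewise for F′); these conditional choice distributions do not depend on z (excluded covariates). For each z ∈ Z, let (𝒟_z, m_z, (F_t)_{t=1}^{T}) and (𝒟′_z, m′_z, (F′_t)_{t=1}^{T}) be choice-set structures on 𝒴 with horizon T, each satisfying the linear independence condition of Theorem 1 (for every 𝒯* ⊆ {1,…,T} with |𝒯*| = K, the family {(y_t)_{t∈𝒯*} ↦ ∏_{t∈𝒯*} F_t(y_t|D)}_{D∈𝒟_z}, respectively the primed family over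 𝒟′_z, is linearly independent), and suppose the two structures induce the same joint distribution on 𝒴^T for every z ∈ Z. If ⋃_{z∈Z} 𝒟_z = 2^𝒴 ∖ {∅}, then F′_t(·|D) = F_t(·|D) for every t ∈ {1,…,T} and every nonempty subset D ⊆ 𝒴. -/
/-- Surjectivity of `mulVec` for a matrix with linearly independent rows. -/
lemma matrix_mulVec_surj_of_rows_li {ι B : Type*} [Fintype ι] [Fintype B] [DecidableEq ι]
    (M : Matrix ι B ℝ)
    (h : ∀ c : ι → ℝ, (∀ b, ∑ i, c i * M i b = 0) → ∀ i, c i = 0) :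
    Function.Surjective M.mulVec := by
  have hker : LinearMap.ker M.transpose.mulVecLin = ⊥ := by
    rw [LinearMap.ker_eq_bot']
    intro c hc
    funext i
    refine h c (fun b => ?_) i
    have := congrFun hc b
    simp only [Matrix.mulVecLin_apply, Matrix.mulVec_transpose, Matrix.vecMul,
      dotProduct] at this
    simpa [mul_comm] using this
  have hinj : Function.Injective M.transpose.mulVecLin := LinearMap.ker_eq_bot.mp hker
  have h1 : M.transpose.rank = Fintype.card ι := by
    unfold Matrix.rank
    rw [LinearMap.finrank_range_of_inj hinj, Module.finrank_pi]
  have h2 : M.rank = Fintype.card ι := by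
    rw [← Matrix.rank_transpose]; exact h1
  have h3 : LinearMap.range M.mulVecLin = ⊤ := by
    apply Submodule.eq_top_of_finrank_eq
    rw [Module.finrank_pi]
    exact h2
  exact LinearMap.range_eq_top.mp h3

/-- Dual extraction: from a family of rows that is linearly independent,
extract a "dual functional" given by finitely many evaluation points. -/
lemma dual_extract {ι B : Type*} [Fintype ι] [Fintype B] [DecidableEq ι]
    (M : Matrix ι B ℝ)
    (h : ∀ c : ι → ℝ, (∀ b, ∑ i, c i * M i b = 0) → ∀ i, c i = 0) (i0 : ι) :
    ∃ ξ : B → ℝ, ∀ i, ∑ b, M i b * ξ b = if i = i0 then 1 else 0 := by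
  obtain ⟨ξ, hξ⟩ := matrix_mulVec_surj_of_rows_li M h (Pi.single i0 1)
  refine ⟨ξ, fun i => ?_⟩
  have := congrFun hξ i
  simpa [Matrix.mulVec, dotProduct, Pi.single_apply] using this

/-- Marginalizing out one coordinate of a mixture of product measures. -/
lemma erase_step {Y : Type*} [Fintype Y] (𝒜 : Finset (Finset Y)) (w : Finset Y → ℝ)
    (G : ℕ → Finset Y → Y → ℝ) (S' : Finset ℕ) (a : ℕ) (ha : a ∈ S')
    (hsum : ∀ D ∈ 𝒜, ∑ y, G a D y = 1) (ys : ℕ → Y) :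
    ∑ D ∈ 𝒜, w D * ∏ s ∈ S'.erase a, G s D (ys s)
      = ∑ y' : Y, ∑ D ∈ 𝒜, w D * ∏ s ∈ S', G s D (Function.update ys a y' s) := by
  rw [Finset.sum_comm]
  refine Finset.sum_congr rfl fun D hD => ?_
  have hprod : ∀ y' : Y, ∏ s ∈ S', G s D (Function.update ys a y' s)
      = G a D y' * ∏ s ∈ S'.erase a, G s D (ys s) := by
    intro y'
    rw [← Finset.mul_prod_erase _ _ ha, Function.update_self]
    congr 1
    refine Finset.prod_congr rfl fun s hs => ?_
    rw [Function.update_of_ne (Finset.ne_of_mem_erase hs)]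
  calc w D * ∏ s ∈ S'.erase a, G s D (ys s)
      = w D * ((∑ y', G a D y') * ∏ s ∈ S'.erase a, G s D (ys s)) := by
        rw [hsum D hD, one_mul]
    _ = ∑ y', w D * (G a D y' * ∏ s ∈ S'.erase a, G s D (ys s)) := by
        rw [Finset.sum_mul, Finset.mul_sum]
    _ = ∑ y', w D * ∏ s ∈ S', G s D (Function.update ys a y' s) :=
        Finset.sum_congr rfl fun y' _ => by rw [hprod y']

/-- **Corollary 1 (full choice-set variation via excluded covariates).**
The conditional choice distributions `F`, `F'` do not depend on the excluded
covariate `z ∈ Z` and are full-support choice distributions on every nonempty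
`D ⊆ 𝒴`.  If for every `z` the structures `(𝒟 z, m z, F)` and `(𝒟' z, m' z, F')`
are choice-set structures each satisfying the linear-independence condition of
Theorem 1, they induce the same joint distribution on `𝒴^T` for every `z`, and
the union `⋃_z 𝒟 z` is all of `2^𝒴 ∖ {∅}`, then `F' = F` on every nonempty
subset of `𝒴`.  Time is 0-based: `{1,…,T}` of the paper is `{0,…,T-1}`. -/
theorem full_variation_identification
    {Y : Type*} [Fintype Y] [DecidableEq Y] [Nonempty Y]
    {Z : Type*} [Nonempty Z]
    (T : ℕ) (hT : 3 ≤ T) (K : ℕ) (hK : K = (T - 1) / 2)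
    (𝒟 𝒟' : Z → Finset (Finset Y))
    (h𝒟 : ∀ z, (𝒟 z).Nonempty) (h𝒟' : ∀ z, (𝒟' z).Nonempty)
    (h𝒟ne : ∀ z, ∀ D ∈ 𝒟 z, D.Nonempty) (h𝒟'ne : ∀ z, ∀ D ∈ 𝒟' z, D.Nonempty)
    (m m' : Z → Finset Y → ℝ)
    (hm : ∀ z, ∀ D ∈ 𝒟 z, 0 < m z D) (hm' : ∀ z, ∀ D ∈ 𝒟' z, 0 < m' z D)
    (hmsum : ∀ z, ∑ D ∈ 𝒟 z, m z D = 1) (hm'sum : ∀ z, ∑ D ∈ 𝒟' z, m' z D = 1)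
    (F F' : ℕ → Finset Y → Y → ℝ)
    (hFpos : ∀ t < T, ∀ D : Finset Y, D.Nonempty → ∀ y ∈ D, 0 < F t D y)
    (hFzero : ∀ t < T, ∀ D : Finset Y, D.Nonempty → ∀ y ∉ D, F t D y = 0)
    (hFsum : ∀ t < T, ∀ D : Finset Y, D.Nonempty → ∑ y, F t D y = 1)
    (hF'pos : ∀ t < T, ∀ D : Finset Y, D.Nonempty → ∀ y ∈ D, 0 < F' t D y)
    (hF'zero : ∀ t < T, ∀ D : Finset Y, D.Nonempty → ∀ y ∉ D, F' t D y = 0)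
    (hF'sum : ∀ t < T, ∀ D : Finset Y, D.Nonempty → ∑ y, F' t D y = 1)
    (hLI : ∀ z, ∀ 𝒯 ⊆ Finset.range T, 𝒯.card = K →
      ∀ α : Finset Y → ℝ,
        (∀ ys : ℕ → Y, ∑ D ∈ 𝒟 z, α D * ∏ t ∈ 𝒯, F t D (ys t) = 0) →
        ∀ D ∈ 𝒟 z, α D = 0)
    (hLI' : ∀ z, ∀ 𝒯 ⊆ Finset.range T, 𝒯.card = K →
      ∀ α : Finset Y → ℝ,
        (∀ ys : ℕ → Y, ∑ D ∈ 𝒟' z, α D * ∏ t ∈ 𝒯, F' t D (ys t) = 0) →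
        ∀ D ∈ 𝒟' z, α D = 0)
    (heq : ∀ z, ∀ ys : ℕ → Y,
      ∑ D ∈ 𝒟 z, m z D * ∏ t ∈ Finset.range T, F t D (ys t)
        = ∑ D ∈ 𝒟' z, m' z D * ∏ t ∈ Finset.range T, F' t D (ys t))
    (hfull : ∀ D : Finset Y, D.Nonempty → ∃ z, D ∈ 𝒟 z) :
    ∀ t < T, ∀ D : Finset Y, D.Nonempty → ∀ y : Y, F' t D y = F t D y := by
  classical
  intro t ht D hD y
  obtain ⟨z, hzD⟩ := hfull D hD
  have htR : t ∈ Finset.range T := Finset.mem_range.mpr ht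
  have hEcard : ((Finset.range T).erase t).card = T - 1 := by
    rw [Finset.card_erase_of_mem htR, Finset.card_range]
  have hK2 : 2 * K ≤ T - 1 := by omega
  obtain ⟨𝒯1, h1sub, h1card⟩ :=
    Finset.exists_subset_card_eq (show K ≤ ((Finset.range T).erase t).card by omega)
  obtain ⟨𝒯2, h2sub, h2card⟩ :=
    Finset.exists_subset_card_eq
      (show K ≤ (((Finset.range T).erase t) \ 𝒯1).card by
        rw [Finset.card_sdiff_of_subset h1sub, hEcard, h1card]; omega)
  have h1T : 𝒯1 ⊆ Finset.range T := h1sub.trans (Finset.erase_subset _ _)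
  have h2E : 𝒯2 ⊆ (Finset.range T).erase t := h2sub.trans Finset.sdiff_subset
  have h2T : 𝒯2 ⊆ Finset.range T := h2E.trans (Finset.erase_subset _ _)
  have hdisj : Disjoint 𝒯1 𝒯2 := by
    rw [Finset.disjoint_left]
    intro x hx1 hx2
    exact (Finset.mem_sdiff.mp (h2sub hx2)).2 hx1
  have ht1 : t ∉ 𝒯1 := fun h => Finset.notMem_erase t _ (h1sub h)
  have ht2 : t ∉ 𝒯2 := fun h => Finset.notMem_erase t _ (h2E h)
  have hs2T : ∀ s ∈ 𝒯2, s < T := fun s hs => Finset.mem_range.mp (h2T hs)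
  -- Marginalization
  have marg : ∀ E : Finset ℕ, ∀ ys : ℕ → Y,
      ∑ Dm ∈ 𝒟 z, m z Dm * ∏ s ∈ Finset.range T \ E, F s Dm (ys s)
        = ∑ Dm ∈ 𝒟' z, m' z Dm * ∏ s ∈ Finset.range T \ E, F' s Dm (ys s) := by
    intro E
    induction E using Finset.induction_on with
    | empty => intro ys; simpa using heq z ys
    | @insert a E ha ih =>
      intro ys
      rw [Finset.sdiff_insert]
      by_cases haR : a ∈ Finset.range T \ E
      · have haT : a < T := Finset.mem_range.mp (Finset.mem_sdiff.mp haR).1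
        rw [erase_step (𝒟 z) (m z) F _ a haR
            (fun Dm hDm => hFsum a haT Dm (h𝒟ne z Dm hDm)) ys,
          erase_step (𝒟' z) (m' z) F' _ a haR
            (fun Dm hDm => hF'sum a haT Dm (h𝒟'ne z Dm hDm)) ys]
        exact Finset.sum_congr rfl fun y' _ => ih _
      · rw [Finset.erase_eq_of_notMem haR]; exact ih ys
  have hdisjt : Disjoint (𝒯1 ∪ 𝒯2) {t} := by
    rw [Finset.disjoint_singleton_right, Finset.mem_union]
    rintro (h | h)
    · exact ht1 h
    · exact ht2 h
  have hSsub : 𝒯1 ∪ 𝒯2 ∪ {t} ⊆ Finset.range T :=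
    Finset.union_subset (Finset.union_subset h1T h2T) (Finset.singleton_subset_iff.mpr htR)
  have key : ∀ ys : ℕ → Y,
      ∑ Dm ∈ 𝒟 z, m z Dm * ∏ s ∈ 𝒯1 ∪ 𝒯2 ∪ {t}, F s Dm (ys s)
        = ∑ Dm ∈ 𝒟' z, m' z Dm * ∏ s ∈ 𝒯1 ∪ 𝒯2 ∪ {t}, F' s Dm (ys s) := by
    intro ys
    have h := marg (Finset.range T \ (𝒯1 ∪ 𝒯2 ∪ {t})) ys
    rwa [Finset.sdiff_sdiff_eq_self hSsub] at h
  -- Equation (1): free coordinates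
  have Eq1 : ∀ (a b : ℕ → Y) (y0 : Y),
      ∑ Dm ∈ 𝒟 z, m z Dm *
          ((∏ s ∈ 𝒯1, F s Dm (a s)) * (∏ s ∈ 𝒯2, F s Dm (b s)) * F t Dm y0)
        = ∑ Dm ∈ 𝒟' z, m' z Dm *
            ((∏ s ∈ 𝒯1, F' s Dm (a s)) * (∏ s ∈ 𝒯2, F' s Dm (b s)) * F' t Dm y0) := by
    intro a b y0
    have hsplit : ∀ (G : ℕ → Finset Y → Y → ℝ) (Dm : Finset Y),
        ∏ s ∈ 𝒯1 ∪ 𝒯2 ∪ {t}, G s Dm (if s ∈ 𝒯1 then a s else if s ∈ 𝒯2 then b s else y0)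
          = (∏ s ∈ 𝒯1, G s Dm (a s)) * (∏ s ∈ 𝒯2, G s Dm (b s)) * G t Dm y0 := by
      intro G Dm
      rw [Finset.prod_union hdisjt, Finset.prod_singleton, Finset.prod_union hdisj]
      congr 1
      · congr 1
        · exact Finset.prod_congr rfl fun s hs => by rw [if_pos hs]
        · refine Finset.prod_congr rfl fun s hs => ?_
          rw [if_neg (Finset.disjoint_right.mp hdisj hs), if_pos hs]
      · rw [if_neg ht1, if_neg ht2]
    have hk := key (fun s => if s ∈ 𝒯1 then a s else if s ∈ 𝒯2 then b s else y0)
    simp only [hsplit] at hk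
    exact hk
  -- collapse over the t-coordinate
  have collapse : ∀ (𝒜 : Finset (Finset Y)) (w : Finset Y → ℝ) (G : ℕ → Finset Y → Y → ℝ)
      (_ : ∀ Dm ∈ 𝒜, ∑ y0, G t Dm y0 = 1) (c : Finset Y → ℝ),
      ∑ y0 : Y, ∑ Dm ∈ 𝒜, w Dm * (c Dm * G t Dm y0) = ∑ Dm ∈ 𝒜, w Dm * c Dm := by
    intro 𝒜 w G hG c
    rw [Finset.sum_comm]
    refine Finset.sum_congr rfl fun Dm hDm => ?_
    rw [← Finset.mul_sum, ← Finset.mul_sum, hG Dm hDm, mul_one]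
  have Eq2 : ∀ (a b : ℕ → Y),
      ∑ Dm ∈ 𝒟 z, m z Dm * ((∏ s ∈ 𝒯1, F s Dm (a s)) * (∏ s ∈ 𝒯2, F s Dm (b s)))
        = ∑ Dm ∈ 𝒟' z, m' z Dm *
            ((∏ s ∈ 𝒯1, F' s Dm (a s)) * (∏ s ∈ 𝒯2, F' s Dm (b s))) := by
    intro a b
    calc ∑ Dm ∈ 𝒟 z, m z Dm * ((∏ s ∈ 𝒯1, F s Dm (a s)) * (∏ s ∈ 𝒯2, F s Dm (b s)))
        = ∑ y0 : Y, ∑ Dm ∈ 𝒟 z, m z Dm *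
            (((∏ s ∈ 𝒯1, F s Dm (a s)) * (∏ s ∈ 𝒯2, F s Dm (b s))) * F t Dm y0) :=
          (collapse (𝒟 z) (m z) F (fun Dm hDm => hFsum t ht Dm (h𝒟ne z Dm hDm))
            (fun Dm => (∏ s ∈ 𝒯1, F s Dm (a s)) * (∏ s ∈ 𝒯2, F s Dm (b s)))).symm
      _ = ∑ y0 : Y, ∑ Dm ∈ 𝒟' z, m' z Dm *
            (((∏ s ∈ 𝒯1, F' s Dm (a s)) * (∏ s ∈ 𝒯2, F' s Dm (b s))) * F' t Dm y0) := by
          refine Finset.sum_congr rfl fun y0 _ => ?_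
          have h := Eq1 a b y0
          simpa [mul_assoc] using h
      _ = ∑ Dm ∈ 𝒟' z, m' z Dm *
            ((∏ s ∈ 𝒯1, F' s Dm (a s)) * (∏ s ∈ 𝒯2, F' s Dm (b s))) :=
          collapse (𝒟' z) (m' z) F' (fun Dm hDm => hF'sum t ht Dm (h𝒟'ne z Dm hDm))
            (fun Dm => (∏ s ∈ 𝒯1, F' s Dm (a s)) * (∏ s ∈ 𝒯2, F' s Dm (b s)))
  -- Dual extraction setup on the 𝒯2-side for the primed family
  set β : ({x // x ∈ 𝒯2} → Y) → ℕ → Y :=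
    fun b s => if h : s ∈ 𝒯2 then b ⟨s, h⟩ else Classical.arbitrary Y with hβdef
  have hβ : ∀ (G : ℕ → Finset Y → Y → ℝ) (Dm : Finset Y) (ys : ℕ → Y),
      ∏ s ∈ 𝒯2, G s Dm (β (fun j => ys j.1) s) = ∏ s ∈ 𝒯2, G s Dm (ys s) := by
    intro G Dm ys
    refine Finset.prod_congr rfl fun s hs => ?_
    rw [hβdef]
    simp [hs]
  set Mx : Matrix {x // x ∈ 𝒟' z} ({x // x ∈ 𝒯2} → Y) ℝ :=
    fun i b => m' z i.1 * ∏ s ∈ 𝒯2, F' s i.1 (β b s) with hMxdef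
  have hMx : ∀ c : {x // x ∈ 𝒟' z} → ℝ,
      (∀ b, ∑ i, c i * Mx i b = 0) → ∀ i, c i = 0 := by
    intro c hc i
    have hα := hLI' z 𝒯2 h2T h2card
      (fun Dm => if h : Dm ∈ 𝒟' z then c ⟨Dm, h⟩ * m' z Dm else 0)
      (by
        intro ys
        rw [← Finset.sum_coe_sort (𝒟' z)]
        have hext : ∀ i : {x // x ∈ 𝒟' z},
            (if h : i.1 ∈ 𝒟' z then c ⟨i.1, h⟩ * m' z i.1 else 0) *
                ∏ s ∈ 𝒯2, F' s i.1 (ys s)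
              = c i * Mx i (fun j => ys j.1) := by
          intro i
          rw [dif_pos i.2, hMxdef]
          simp only [Subtype.coe_eta]
          rw [hβ F' i.1 ys]
          ring
        rw [Finset.sum_congr rfl fun i _ => hext i]
        exact hc (fun j => ys j.1))
      i.1 i.2
    rw [dif_pos i.2, Subtype.coe_eta] at hα
    rcases mul_eq_zero.mp hα with h | h
    · exact h
    · exact absurd h (ne_of_gt (hm' z i.1 i.2))
  -- the coefficients q expressing primed 𝒯1-products in terms of unprimed ones
  have hq0 : ∀ D0 : Finset Y, ∃ qf : Finset Y → ℝ, D0 ∈ 𝒟' z → ∀ a : ℕ → Y,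
      ∏ s ∈ 𝒯1, F' s D0 (a s) = ∑ Dm ∈ 𝒟 z, qf Dm * ∏ s ∈ 𝒯1, F s Dm (a s) := by
    intro D0
    by_cases h0 : D0 ∈ 𝒟' z
    · obtain ⟨ξ, hξ⟩ := dual_extract Mx hMx ⟨D0, h0⟩
      refine ⟨fun Dm => ∑ b, ξ b * (m z Dm * ∏ s ∈ 𝒯2, F s Dm (β b s)), fun _ a => ?_⟩
      symm
      calc ∑ Dm ∈ 𝒟 z, (∑ b, ξ b * (m z Dm * ∏ s ∈ 𝒯2, F s Dm (β b s))) *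
              ∏ s ∈ 𝒯1, F s Dm (a s)
          = ∑ b, ξ b * ∑ Dm ∈ 𝒟 z, m z Dm *
              ((∏ s ∈ 𝒯1, F s Dm (a s)) * ∏ s ∈ 𝒯2, F s Dm (β b s)) := by
            simp only [Finset.sum_mul, Finset.mul_sum]
            rw [Finset.sum_comm]
            exact Finset.sum_congr rfl fun b _ =>
              Finset.sum_congr rfl fun Dm _ => by ring
        _ = ∑ b, ξ b * ∑ Dm ∈ 𝒟' z, m' z Dm *
              ((∏ s ∈ 𝒯1, F' s Dm (a s)) * ∏ s ∈ 𝒯2, F' s Dm (β b s)) :=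
            Finset.sum_congr rfl fun b _ => by rw [Eq2 a (β b)]
        _ = ∑ i : {x // x ∈ 𝒟' z}, (∑ b, Mx i b * ξ b) * ∏ s ∈ 𝒯1, F' s i.1 (a s) := by
            simp only [Finset.mul_sum, Finset.sum_mul]
            rw [Finset.sum_comm, ← Finset.sum_coe_sort (𝒟' z)]
            refine Finset.sum_congr rfl fun i _ => Finset.sum_congr rfl fun b _ => ?_
            rw [hMxdef]
            ring
        _ = ∏ s ∈ 𝒯1, F' s D0 (a s) := by
            rw [Finset.sum_congr rfl fun i (_ : i ∈ Finset.univ) => by rw [hξ i]]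
            simp
    · exact ⟨0, fun h => absurd h h0⟩
  choose q hq using hq0
  -- Equations A and B for our D
  have EqA : ∀ (b : ℕ → Y) (y0 : Y),
      m z D * ((∏ s ∈ 𝒯2, F s D (b s)) * F t D y0)
        = ∑ D' ∈ 𝒟' z, m' z D' * q D' D * ((∏ s ∈ 𝒯2, F' s D' (b s)) * F' t D' y0) := by
    intro b y0
    have hα := hLI z 𝒯1 h1T h1card
      (fun Dm => m z Dm * ((∏ s ∈ 𝒯2, F s Dm (b s)) * F t Dm y0)
        - ∑ D' ∈ 𝒟' z, m' z D' * q D' Dm * ((∏ s ∈ 𝒯2, F' s D' (b s)) * F' t D' y0))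
      (by
        intro ys
        simp only [sub_mul, Finset.sum_sub_distrib]
        rw [sub_eq_zero]
        calc ∑ Dm ∈ 𝒟 z, m z Dm * ((∏ s ∈ 𝒯2, F s Dm (b s)) * F t Dm y0) *
                ∏ s ∈ 𝒯1, F s Dm (ys s)
            = ∑ Dm ∈ 𝒟 z, m z Dm *
                ((∏ s ∈ 𝒯1, F s Dm (ys s)) * (∏ s ∈ 𝒯2, F s Dm (b s)) * F t Dm y0) :=
              Finset.sum_congr rfl fun Dm _ => by ring
          _ = ∑ D' ∈ 𝒟' z, m' z D' *
                ((∏ s ∈ 𝒯1, F' s D' (ys s)) * (∏ s ∈ 𝒯2, F' s D' (b s)) * F' t D' y0) :=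
              Eq1 ys b y0
          _ = ∑ D' ∈ 𝒟' z, ∑ Dm ∈ 𝒟 z,
                (m' z D' * q D' Dm * ((∏ s ∈ 𝒯2, F' s D' (b s)) * F' t D' y0)) *
                  ∏ s ∈ 𝒯1, F s Dm (ys s) := by
              refine Finset.sum_congr rfl fun D' hD' => ?_
              rw [hq D' hD' ys]
              simp only [Finset.sum_mul, Finset.mul_sum]
              exact Finset.sum_congr rfl fun Dm _ => by ring
          _ = ∑ Dm ∈ 𝒟 z,
                (∑ D' ∈ 𝒟' z, m' z D' * q D' Dm * ((∏ s ∈ 𝒯2, F' s D' (b s)) * F' t D' y0)) *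
                  ∏ s ∈ 𝒯1, F s Dm (ys s) := by
              rw [Finset.sum_comm]
              exact Finset.sum_congr rfl fun Dm _ => by rw [Finset.sum_mul])
      D hzD
    exact sub_eq_zero.mp hα
  have EqB : ∀ (b : ℕ → Y),
      m z D * ∏ s ∈ 𝒯2, F s D (b s)
        = ∑ D' ∈ 𝒟' z, m' z D' * q D' D * ∏ s ∈ 𝒯2, F' s D' (b s) := by
    intro b
    have hα := hLI z 𝒯1 h1T h1card
      (fun Dm => m z Dm * ∏ s ∈ 𝒯2, F s Dm (b s)
        - ∑ D' ∈ 𝒟' z, m' z D' * q D' Dm * ∏ s ∈ 𝒯2, F' s D' (b s))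
      (by
        intro ys
        simp only [sub_mul, Finset.sum_sub_distrib]
        rw [sub_eq_zero]
        calc ∑ Dm ∈ 𝒟 z, m z Dm * (∏ s ∈ 𝒯2, F s Dm (b s)) * ∏ s ∈ 𝒯1, F s Dm (ys s)
            = ∑ Dm ∈ 𝒟 z, m z Dm *
                ((∏ s ∈ 𝒯1, F s Dm (ys s)) * ∏ s ∈ 𝒯2, F s Dm (b s)) :=
              Finset.sum_congr rfl fun Dm _ => by ring
          _ = ∑ D' ∈ 𝒟' z, m' z D' *
                ((∏ s ∈ 𝒯1, F' s D' (ys s)) * ∏ s ∈ 𝒯2, F' s D' (b s)) := Eq2 ys b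
          _ = ∑ D' ∈ 𝒟' z, ∑ Dm ∈ 𝒟 z,
                (m' z D' * q D' Dm * ∏ s ∈ 𝒯2, F' s D' (b s)) *
                  ∏ s ∈ 𝒯1, F s Dm (ys s) := by
              refine Finset.sum_congr rfl fun D' hD' => ?_
              rw [hq D' hD' ys]
              simp only [Finset.sum_mul, Finset.mul_sum]
              exact Finset.sum_congr rfl fun Dm _ => by ring
          _ = ∑ Dm ∈ 𝒟 z,
                (∑ D' ∈ 𝒟' z, m' z D' * q D' Dm * ∏ s ∈ 𝒯2, F' s D' (b s)) *
                  ∏ s ∈ 𝒯1, F s Dm (ys s) := by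
              rw [Finset.sum_comm]
              exact Finset.sum_congr rfl fun Dm _ => by rw [Finset.sum_mul])
      D hzD
    exact sub_eq_zero.mp hα
  -- combination: each nonzero q-coefficient forces equality of the t-distributions
  have combo : ∀ y0 : Y, ∀ D' ∈ 𝒟' z,
      m' z D' * q D' D * (F' t D' y0 - F t D y0) = 0 := by
    intro y0
    refine hLI' z 𝒯2 h2T h2card
      (fun D' => m' z D' * q D' D * (F' t D' y0 - F t D y0)) ?_
    intro ys
    calc ∑ D' ∈ 𝒟' z, m' z D' * q D' D * (F' t D' y0 - F t D y0) *
            ∏ s ∈ 𝒯2, F' s D' (ys s)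
        = (∑ D' ∈ 𝒟' z, m' z D' * q D' D * ((∏ s ∈ 𝒯2, F' s D' (ys s)) * F' t D' y0))
            - F t D y0 * ∑ D' ∈ 𝒟' z, m' z D' * q D' D * ∏ s ∈ 𝒯2, F' s D' (ys s) := by
          rw [Finset.mul_sum, ← Finset.sum_sub_distrib]
          exact Finset.sum_congr rfl fun D' _ => by ring
      _ = m z D * ((∏ s ∈ 𝒯2, F s D (ys s)) * F t D y0)
            - F t D y0 * (m z D * ∏ s ∈ 𝒯2, F s D (ys s)) := by
          rw [← EqA ys y0, ← EqB ys]
      _ = 0 := by ring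
  -- there is a nonzero coefficient
  have hrow : ∃ D' ∈ 𝒟' z, q D' D ≠ 0 := by
    by_contra h
    push_neg at h
    obtain ⟨y1, hy1⟩ := id hD
    have hB := EqB (fun _ => y1)
    rw [Finset.sum_eq_zero (fun D' hD' => by rw [h D' hD']; ring)] at hB
    have hpos : 0 < m z D * ∏ s ∈ 𝒯2, F s D y1 :=
      mul_pos (hm z D hzD)
        (Finset.prod_pos fun s hs => hFpos s (hs2T s hs) D hD y1 hy1)
    exact absurd hB (ne_of_gt hpos)
  obtain ⟨D', hD'mem, hqD'⟩ := hrow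
  have hfe : ∀ y0, F' t D' y0 = F t D y0 := by
    intro y0
    have h0 := combo y0 D' hD'mem
    have h1 : F' t D' y0 - F t D y0 = 0 := by
      rcases mul_eq_zero.mp h0 with h | h
      · rcases mul_eq_zero.mp h with h | h
        · exact absurd h (ne_of_gt (hm' z D' hD'mem))
        · exact absurd h hqD'
      · exact h
    linarith
  have hDeq : D' = D := by
    ext x
    constructor
    · intro hx
      have hpos := hF'pos t ht D' (h𝒟'ne z D' hD'mem) x hx
      rw [hfe x] at hpos
      by_contra hxD
      rw [hFzero t ht D hD x hxD] at hpos
      exact lt_irrefl 0 hpos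
    · intro hx
      have hpos := hFpos t ht D hD x hx
      rw [← hfe x] at hpos
      by_contra hxD'
      rw [hF'zero t ht D' (h𝒟'ne z D' hD'mem) x hxD'] at hpos
      exact lt_irrefl 0 hpos
  have hy := hfe y
  rwa [hDeq] at hy
end
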